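/- arXiv:2009.06000 — 6 statements merged into one kernel-verified Lean document; each statement's English description precedes it below -/
import Mathlib

section
/- Let A be an F×K array with entries from {*} ∪ [S], where each ordinary symbol s ∈ [S] appears at least once, and suppose that whenever two distinct entries a_{i,j} = a_{i',j'} = s for an ordinary symbol s, we have i ≠ i', j ≠ j', and a_{i,j'} = a_{i',j} = *. If n denotes the total number of ordinary-symbol entries of A, then S ≥ nF/(KF + F − n). -/
open Finset

/-- counting lower bound on the number of ordinary symbols of a
PDA-like array (Lemma 3 of Cheng et al.).  Entries are `Option (Fin S)` where
`none` plays the role of the star symbol `*` and `some s` is the ordinary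
symbol `s`. -/
theorem stmt0 (K F S : ℕ) (hK : 1 ≤ K) (hF : 1 ≤ F) (hS : 1 ≤ S)
    (A : Fin F → Fin K → Option (Fin S))
    (hsurj : ∀ s : Fin S, ∃ i j, A i j = some s)
    (hprop : ∀ (i i' : Fin F) (j j' : Fin K) (s : Fin S),
      A i j = some s → A i' j' = some s → (i, j) ≠ (i', j') →
      i ≠ i' ∧ j ≠ j' ∧ A i j' = none ∧ A i' j = none)
    (n : ℕ)
    (hn : n = (Finset.univ.filter
      (fun p : Fin F × Fin K => A p.1 p.2 ≠ none)).card)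
    (hnKF : n ≤ K * F) :
    (n : ℚ) * F / ((K : ℚ) * F + F - n) ≤ S := by
  classical
  set occ : Fin S → Finset (Fin F × Fin K) :=
    fun s => univ.filter (fun p => A p.1 p.2 = some s) with hocc
  set rows : Fin S → Finset (Fin F) :=
    fun s => univ.filter (fun i => ∃ a, A i a = some s) with hrows
  set cols : Fin S → Finset (Fin K) :=
    fun s => univ.filter (fun j => ∃ b, A b j = some s) with hcols
  set m : Fin F → Fin K → ℕ :=
    fun i j => (univ.filter (fun s : Fin S =>
      (∃ a, A i a = some s) ∧ (∃ b, A b j = some s))).card with hm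
  set r : Fin F → ℕ := fun i => (univ.filter (fun j => A i j ≠ none)).card with hr
  -- rows s has the same cardinality as occ s
  have hinj : ∀ s : Fin S, ∀ p ∈ occ s, ∀ q ∈ occ s, p ≠ q →
      p.1 ≠ q.1 ∧ p.2 ≠ q.2 := by
    intro s p hp q hq hne
    simp only [hocc, mem_filter, mem_univ, true_and] at hp hq
    have hne' : (p.1, p.2) ≠ (q.1, q.2) := by
      simpa using hne
    obtain ⟨h1, h2, _, _⟩ := hprop p.1 q.1 p.2 q.2 s hp hq hne'
    exact ⟨h1, h2⟩
  have h1 : ∀ s, (rows s).card = (occ s).card := by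
    intro s
    have him : rows s = (occ s).image Prod.fst := by
      ext i
      simp [hrows, hocc, Prod.exists]
    rw [him, Finset.card_image_of_injOn]
    intro p hp q hq h
    by_contra hne
    exact (hinj s p hp q hq hne).1 h
  have h2 : ∀ s, (cols s).card = (occ s).card := by
    intro s
    have him : cols s = (occ s).image Prod.snd := by
      ext j
      simp [hcols, hocc, Prod.exists]
    rw [him, Finset.card_image_of_injOn]
    intro p hp q hq h
    by_contra hne
    exact (hinj s p hp q hq hne).2 h
  -- n is the sum of occurrence counts
  have h3 : n = ∑ s, (occ s).card := by
    rw [hn, ← Finset.card_biUnion]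
    · congr 1
      ext p
      simp only [hocc, mem_biUnion, mem_filter, mem_univ, true_and]
      constructor
      · intro h
        obtain ⟨s, hs⟩ := Option.ne_none_iff_exists'.mp h
        exact ⟨s, hs⟩
      · rintro ⟨s, hs⟩
        simp [hs]
    · intro s _ t _ hst
      simp only [Finset.disjoint_left, hocc, mem_filter, mem_univ, true_and]
      intro p hp hq
      rw [hp] at hq
      exact hst (by simpa using hq)
  -- double counting
  have h4 : ∑ s, (rows s).card * (cols s).card = ∑ i, ∑ j, m i j := by
    have key : ∀ s, (rows s).card * (cols s).card
        = ∑ i, ∑ j, (if (∃ a, A i a = some s) ∧ (∃ b, A b j = some s)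
            then 1 else 0) := by
      intro s
      rw [hrows, hcols, Finset.card_filter, Finset.card_filter,
        Finset.sum_mul_sum]
      refine Finset.sum_congr rfl fun i _ => Finset.sum_congr rfl fun j _ => ?_
      by_cases hP : ∃ a, A i a = some s <;> by_cases hQ : ∃ b, A b j = some s <;>
        simp [hP, hQ]
    calc ∑ s, (rows s).card * (cols s).card
        = ∑ s, ∑ i, ∑ j, (if (∃ a, A i a = some s) ∧ (∃ b, A b j = some s)
            then 1 else 0) := Finset.sum_congr rfl fun s _ => key s
      _ = ∑ i, ∑ j, ∑ s, (if (∃ a, A i a = some s) ∧ (∃ b, A b j = some s)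
            then 1 else 0) := by
          rw [Finset.sum_comm]
          exact Finset.sum_congr rfl fun i _ => Finset.sum_comm
      _ = ∑ i, ∑ j, m i j := by
          refine Finset.sum_congr rfl fun i _ => Finset.sum_congr rfl fun j _ => ?_
          simp only [hm, Finset.card_filter]
  -- nonstar cells have m ≤ 1
  have h5 : ∀ i j t, A i j = some t → m i j ≤ 1 := by
    intro i j t ht
    rw [hm]
    apply Finset.card_le_one.mpr
    have key : ∀ s ∈ univ.filter (fun s : Fin S =>
        (∃ a, A i a = some s) ∧ (∃ b, A b j = some s)), s = t := by
      intro s hs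
      simp only [mem_filter, mem_univ, true_and] at hs
      obtain ⟨⟨a, ha⟩, ⟨b, hb⟩⟩ := hs
      by_contra hst
      have haj : a ≠ j := by
        intro h; rw [h, ht] at ha; exact hst (by simpa using ha.symm)
      have hne : (i, a) ≠ (b, j) := by
        simp [Prod.ext_iff]; intro _; exact haj
      obtain ⟨_, _, hcross, _⟩ := hprop i b a j s ha hb hne
      rw [ht] at hcross
      exact Option.some_ne_none t hcross
    intro s1 hs1 s2 hs2
    rw [key s1 hs1, key s2 hs2]
  -- m is bounded by the row count
  have h6 : ∀ i j, m i j ≤ r i := by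
    intro i j
    rw [hm, hr]
    apply Finset.card_le_card_of_injOn
      (fun s => if h : ∃ a, A i a = some s then h.choose else j)
    · intro s hs
      simp only [mem_coe, mem_filter, mem_univ, true_and] at hs
      obtain ⟨hA, _⟩ := hs
      simp only [dif_pos hA, mem_coe, mem_filter, mem_univ, true_and]
      rw [hA.choose_spec]
      exact Option.some_ne_none s
    · intro s1 hs1 s2 hs2 h
      simp only [mem_coe, mem_filter, mem_univ, true_and] at hs1 hs2
      obtain ⟨hA1, _⟩ := hs1
      obtain ⟨hA2, _⟩ := hs2
      simp only [dif_pos hA1, dif_pos hA2] at h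
      have e1 := hA1.choose_spec
      have e2 := hA2.choose_spec
      rw [h, e2] at e1
      simpa using e1.symm
  -- row sums
  have h8 : ∑ i, r i = n := by
    rw [hn, Finset.card_filter, Fintype.sum_prod_type]
    exact Finset.sum_congr rfl fun i _ => by simp only [hr, Finset.card_filter]
  have hrK : ∀ i, r i ≤ K := by
    intro i
    rw [hr]
    simpa using Finset.card_filter_le univ (fun j => A i j ≠ none)
  -- per-row bound
  have h7 : ∀ i, (∑ j, m i j) + r i * r i ≤ r i + K * r i := by
    intro i
    have step1 : ∑ j, m i j ≤ ∑ j, (if A i j = none then r i else 1) := by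
      apply Finset.sum_le_sum
      intro j _
      by_cases hj : A i j = none
      · rw [if_pos hj]; exact h6 i j
      · rw [if_neg hj]
        obtain ⟨t, ht⟩ := Option.ne_none_iff_exists'.mp hj
        exact h5 i j t ht
    have step2 : ∑ j, (if A i j = none then r i else 1)
        = (univ.filter (fun j => A i j = none)).card * r i + r i := by
      rw [Finset.sum_ite, Finset.sum_const, Finset.sum_const, smul_eq_mul,
        smul_eq_mul, mul_one]
    set c := (univ.filter (fun j => A i j = none)).card with hc
    have hcK : c + r i = K := by
      rw [hc, hr]
      have := Finset.card_filter_add_card_filter_not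
        (s := (univ : Finset (Fin K))) (p := fun j => A i j = none)
      simpa using this
    have hKr : K * r i = c * r i + r i * r i := by
      rw [← hcK, add_mul]
    calc (∑ j, m i j) + r i * r i ≤ (c * r i + r i) + r i * r i := by
          have := step1.trans_eq step2
          omega
      _ = r i + K * r i := by rw [hKr]; ring
  -- Cauchy-Schwarz over symbols
  set M := ∑ i, ∑ j, m i j with hM
  set R2 := ∑ i, r i * r i with hR2
  have hMR : M + R2 ≤ n + K * n := by
    have : ∑ i, ((∑ j, m i j) + r i * r i) ≤ ∑ i, (r i + K * r i) :=
      Finset.sum_le_sum fun i _ => h7 i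
    rw [Finset.sum_add_distrib, Finset.sum_add_distrib, ← Finset.mul_sum, h8]
      at this
    exact this
  have cauchyS : (n : ℚ)^2 ≤ S * M := by
    have := sq_sum_le_card_mul_sum_sq
      (s := (univ : Finset (Fin S))) (f := fun s => ((occ s).card : ℚ))
    simp only [Finset.card_univ, Fintype.card_fin] at this
    have e1 : (∑ s, ((occ s).card : ℚ)) = (n : ℚ) := by
      rw [h3]; push_cast; rfl
    have e2 : (∑ s, ((occ s).card : ℚ)^2) = (M : ℚ) := by
      have hnat : ∑ s, (occ s).card ^ 2 = M := by
        rw [← h4]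
        exact Finset.sum_congr rfl fun s _ => by rw [h1, h2]; ring
      rw [← hnat]
      push_cast
      rfl
    rw [e1, e2] at this
    exact this
  have cauchyF : (n : ℚ)^2 ≤ F * R2 := by
    have := sq_sum_le_card_mul_sum_sq
      (s := (univ : Finset (Fin F))) (f := fun i => ((r i : ℚ)))
    simp only [Finset.card_univ, Fintype.card_fin] at this
    have e1 : (∑ i, ((r i) : ℚ)) = (n : ℚ) := by
      rw [← h8]; push_cast; rfl
    have e2 : (∑ i, ((r i) : ℚ)^2) = (R2 : ℚ) := by
      rw [hR2]; push_cast; exact Finset.sum_congr rfl fun i _ => by ring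
    rw [e1, e2] at this
    exact this
  -- combine
  have key : (n : ℚ) * n * (F + S) ≤ S * F * (n + K * n) := by
    have hMRq : (M : ℚ) + R2 ≤ n + K * n := by exact_mod_cast hMR
    have hSq : (0:ℚ) ≤ S := by positivity
    have hFq : (0:ℚ) ≤ F := by positivity
    have t1 : (F:ℚ) * ((n:ℚ)^2) ≤ F * (S * M) := mul_le_mul_of_nonneg_left cauchyS hFq
    have t2 : (S:ℚ) * ((n:ℚ)^2) ≤ S * (F * R2) := mul_le_mul_of_nonneg_left cauchyF hSq
    have t3 : (S:ℚ) * F * ((M:ℚ) + R2) ≤ (S:ℚ) * F * ((n:ℚ) + K * n) :=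
      mul_le_mul_of_nonneg_left hMRq (by positivity)
    nlinarith [t1, t2, t3]
  -- finish
  have hd : (0 : ℚ) < (K : ℚ) * F + F - n := by
    have : (n : ℚ) ≤ K * F := by exact_mod_cast hnKF
    have : (0:ℚ) < F := by exact_mod_cast hF
    linarith
  rw [div_le_iff₀ hd]
  rcases Nat.eq_zero_or_pos n with hn0 | hn0
  · subst hn0
    simp
    positivity
  · have hnq : (0:ℚ) < n := by exact_mod_cast hn0
    nlinarith [key, hnq]
end

section
/- Let K ≥ g ≥ 2 be integers and let A be an F×K array over {*} ∪ [S] such that: (1) each row has exactly g−1 stars; (2) each ordinary symbol occurs exactly g times; (3) any two distinct equal ordinary entries a_{i,j} = a_{i',j'} = s satisfy i ≠ i', j ≠ j', and a_{i,j'} = a_{i',j} = *. Then F ≥ C(K, g−1). -/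
/-- if an `F × K` array over `{*} ∪ [S]` (star modelled by
`none`) has exactly `g - 1` stars per row, every ordinary symbol occurring
exactly `g` times, and the PDA cross property, then `F ≥ C(K, g-1)`. -/
theorem stmt2 (K F S g : ℕ) (hg2 : 2 ≤ g) (hgK : g ≤ K)
    (hF : 1 ≤ F) (hS : 1 ≤ S)
    (A : Fin F → Fin K → Option (Fin S))
    (hrow : ∀ i : Fin F,
      (Finset.univ.filter (fun j : Fin K => A i j = none)).card = g - 1)
    (hocc : ∀ s : Fin S,
      (Finset.univ.filter
        (fun p : Fin F × Fin K => A p.1 p.2 = some s)).card = g)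
    (hprop : ∀ (i i' : Fin F) (j j' : Fin K) (s : Fin S),
      A i j = some s → A i' j' = some s → (i, j) ≠ (i', j') →
      i ≠ i' ∧ j ≠ j' ∧ A i j' = none ∧ A i' j = none) :
    K.choose (g - 1) ≤ F := by
  classical
  set B : Fin F → Finset (Fin K) :=
    fun i => Finset.univ.filter (fun j => A i j = none) with hB
  have hBmem : ∀ i j, j ∈ B i ↔ A i j = none := by
    intro i j; simp [hB]
  have hBcard : ∀ i, (B i).card = g - 1 := hrow
  -- Exchange lemma
  have exch : ∀ (i : Fin F) (j j' : Fin K), j ∈ B i → j' ∉ B i →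
      ∃ i', B i' = insert j' ((B i).erase j) := by
    intro i j j' hj hj'
    obtain ⟨s, hs⟩ : ∃ s, A i j' = some s := by
      cases h : A i j' with
      | none => exact absurd ((hBmem i j').2 h) hj'
      | some s => exact ⟨s, rfl⟩
    set P : Finset (Fin F × Fin K) :=
      Finset.univ.filter (fun p => A p.1 p.2 = some s) with hP
    have hPmem : ∀ p : Fin F × Fin K, p ∈ P ↔ A p.1 p.2 = some s := by
      intro p; simp [hP]
    have hPcard : P.card = g := hocc s
    have hij'P : (i, j') ∈ P := (hPmem _).2 hs
    have hne : j ≠ j' := fun h => hj' (h ▸ hj)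
    -- columns are injective on P
    have hinj : Set.InjOn Prod.snd (P : Set (Fin F × Fin K)) := by
      intro p hp q hq hpq
      by_contra hpq'
      obtain ⟨_, hcol, _, _⟩ := hprop p.1 q.1 p.2 q.2 s
        ((hPmem p).1 hp) ((hPmem q).1 hq)
        (by simpa [Prod.ext_iff] using hpq')
      exact hcol hpq
    set T : Finset (Fin K) := P.image Prod.snd with hT
    have hTcard : T.card = g := by
      rw [hT, Finset.card_image_of_injOn hinj, hPcard]
    -- T = insert j' (B i)
    have hTsub : T ⊆ insert j' (B i) := by
      intro x hx
      obtain ⟨p, hp, hpx⟩ := Finset.mem_image.1 hx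
      by_cases hpe : p = (i, j')
      · subst hpx; rw [hpe]; exact Finset.mem_insert_self _ _
      · obtain ⟨_, _, h3, _⟩ := hprop i p.1 j' p.2 s hs ((hPmem p).1 hp)
          (fun h => hpe h.symm)
        subst hpx
        exact Finset.mem_insert_of_mem ((hBmem i p.2).2 h3)
    have hTeq : T = insert j' (B i) := by
      apply Finset.eq_of_subset_of_card_le hTsub
      rw [Finset.card_insert_of_notMem hj', hBcard, hTcard]
      omega
    -- find the position with column j
    have hjT : j ∈ T := hTeq ▸ Finset.mem_insert_of_mem hj
    obtain ⟨p, hp, hpj⟩ := Finset.mem_image.1 hjT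
    refine ⟨p.1, ?_⟩
    have hpne : p ≠ (i, j') := by
      intro h; apply hne; rw [← hpj, h]
    -- B p.1 ⊇ T.erase j
    have hsub : T.erase j ⊆ B p.1 := by
      intro x hx
      obtain ⟨hxj, hxT⟩ := Finset.mem_erase.1 hx
      obtain ⟨q, hq, hqx⟩ := Finset.mem_image.1 hxT
      have hqp : q ≠ p := by
        intro h; apply hxj; rw [← hqx, h, hpj]
      obtain ⟨_, _, h3, _⟩ := hprop p.1 q.1 p.2 q.2 s ((hPmem p).1 hp)
        ((hPmem q).1 hq) (fun h => hqp (h.symm))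
      exact hqx ▸ (hBmem p.1 q.2).2 h3
    have hBeq : B p.1 = T.erase j := by
      symm
      apply Finset.eq_of_subset_of_card_le hsub
      rw [hBcard, Finset.card_erase_of_mem hjT, hTcard]
    rw [hBeq, hTeq, Finset.erase_insert_of_ne hne.symm]
  -- Main induction: every (g-1)-subset is a star set
  have main : ∀ n (C : Finset (Fin K)), C.card = g - 1 →
      ∀ i : Fin F, (C \ B i).card = n → ∃ i', B i' = C := by
    intro n
    induction n with
    | zero =>
      intro C hC i h0
      refine ⟨i, ?_⟩
      have hsub : C ⊆ B i := by
        intro x hx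
        by_contra hx'
        have : x ∈ C \ B i := Finset.mem_sdiff.2 ⟨hx, hx'⟩
        rw [Finset.card_eq_zero.1 h0] at this
        exact absurd this (Finset.notMem_empty x)
      symm
      exact Finset.eq_of_subset_of_card_le hsub (by rw [hBcard, hC])
    | succ n ih =>
      intro C hC i hn
      obtain ⟨j', hj'⟩ : (C \ B i).Nonempty :=
        Finset.card_pos.1 (by omega)
      obtain ⟨hj'C, hj'B⟩ := Finset.mem_sdiff.1 hj'
      obtain ⟨j, hj⟩ : (B i \ C).Nonempty := by
        apply Finset.card_pos.1
        have h1 : (C \ B i).card + (C ∩ B i).card = C.card :=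
          Finset.card_sdiff_add_card_inter C (B i)
        have h2 : (B i \ C).card + (B i ∩ C).card = (B i).card :=
          Finset.card_sdiff_add_card_inter (B i) C
        rw [Finset.inter_comm] at h2
        rw [hC] at h1; rw [hBcard] at h2
        omega
      obtain ⟨hjB, hjC⟩ := Finset.mem_sdiff.1 hj
      obtain ⟨i', hi'⟩ := exch i j j' hjB hj'B
      refine ih C hC i' ?_
      have hset : C \ B i' = (C \ B i).erase j' := by
        rw [hi']
        ext x
        simp only [Finset.mem_sdiff, Finset.mem_insert, Finset.mem_erase]
        constructor
        · rintro ⟨hxC, hx⟩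
          push_neg at hx
          exact ⟨hx.1, hxC, hx.2 (fun h => hjC (h ▸ hxC))⟩
        · rintro ⟨hxj', hxC, hxB⟩
          exact ⟨hxC, by push_neg; exact ⟨hxj', fun _ => hxB⟩⟩
      rw [hset, Finset.card_erase_of_mem hj', hn]
      omega
  -- Conclude
  have hsurj : (Finset.univ : Finset (Fin K)).powersetCard (g - 1) ⊆
      Finset.univ.image B := by
    intro C hC
    have hCcard : C.card = g - 1 := (Finset.mem_powersetCard.1 hC).2
    obtain ⟨i₀⟩ : Nonempty (Fin F) := ⟨⟨0, hF⟩⟩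
    obtain ⟨i', hi'⟩ := main (C \ B i₀).card C hCcard i₀ rfl
    exact Finset.mem_image.2 ⟨i', Finset.mem_univ _, hi'⟩
  calc K.choose (g - 1)
      = ((Finset.univ : Finset (Fin K)).powersetCard (g - 1)).card := by
        rw [Finset.card_powersetCard, Finset.card_univ, Fintype.card_fin]
    _ ≤ (Finset.univ.image B).card := Finset.card_le_card hsurj
    _ ≤ (Finset.univ : Finset (Fin F)).card := Finset.card_image_le
    _ = F := by simp
end

section
/- Let A be a (K,F,Z,S) PDA and define M = 1 + Z(N−1)/F and R = S/F for a real N ≥ 2. Then R ≥ K(N−M)/(N−1+K(M−1)); equivalently S/F ≥ K(F−Z)/(F+KZ). -/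
/-- for any `(K,F,Z,S)` PDA (star modelled by `none`,
exactly `Z` stars per column, every symbol of `[S]` occurring at least once,
PDA cross property), setting `M = 1 + Z(N-1)/F` and `R = S/F` for a real
`N ≥ 2`, we have `R ≥ K(N-M)/(N-1+K(M-1))`; equivalently
`S/F ≥ K(F-Z)/(F+KZ)`. -/
theorem stmt3 (K F Z S : ℕ) (hK : 1 ≤ K) (hF : 1 ≤ F) (hS : 1 ≤ S)
    (hZF : Z ≤ F)
    (A : Fin F → Fin K → Option (Fin S))
    (hcol : ∀ j : Fin K,
      (Finset.univ.filter (fun i : Fin F => A i j = none)).card = Z)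
    (hsurj : ∀ s : Fin S, ∃ i j, A i j = some s)
    (hprop : ∀ (i i' : Fin F) (j j' : Fin K) (s : Fin S),
      A i j = some s → A i' j' = some s → (i, j) ≠ (i', j') →
      i ≠ i' ∧ j ≠ j' ∧ A i j' = none ∧ A i' j = none)
    (N : ℝ) (hN : 2 ≤ N)
    (M R : ℝ)
    (hM : M = 1 + (Z : ℝ) * (N - 1) / F)
    (hR : R = (S : ℝ) / F) :
    (K : ℝ) * (N - M) / (N - 1 + K * (M - 1)) ≤ R ∧
    (K : ℝ) * ((F : ℝ) - Z) / ((F : ℝ) + K * Z) ≤ (S : ℝ) / F := by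
  classical
  haveI : Inhabited (Fin S) := ⟨⟨0, by omega⟩⟩
  -- occurrence sets of each symbol
  set Occ : Fin S → Finset (Fin F × Fin K) :=
    fun s => Finset.univ.filter (fun p : Fin F × Fin K => A p.1 p.2 = some s) with hOccdef
  set g : Fin S → ℕ := fun s => (Occ s).card with hgdef
  set r : Fin F → ℕ :=
    fun i => (Finset.univ.filter (fun j : Fin K => A i j ≠ none)).card with hrdef
  set D : Finset (Fin F × Fin K) :=
    Finset.univ.filter (fun p : Fin F × Fin K => A p.1 p.2 ≠ none) with hDdef
  -- each column has F - Z ordinary entries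
  have hcol' : ∀ j : Fin K,
      (Finset.univ.filter (fun i : Fin F => A i j ≠ none)).card = F - Z := by
    intro j
    have h1 := hcol j
    have h2 := Finset.card_filter_add_card_filter_not
      (s := (Finset.univ : Finset (Fin F))) (p := fun i : Fin F => A i j = none)
    simp only [Finset.card_univ, Fintype.card_fin, ne_eq] at h2 ⊢
    omega
  have hrK : ∀ i, r i ≤ K := by
    intro i
    simpa [hrdef] using
      Finset.card_filter_le (Finset.univ : Finset (Fin K)) (fun j => A i j ≠ none)
  -- total number of ordinary entries
  have hD : D.card = K * (F - Z) := by
    rw [Finset.card_eq_sum_card_fiberwise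
      (f := fun p : Fin F × Fin K => p.2) (t := Finset.univ) (fun x _ => Finset.mem_univ _)]
    have fib : ∀ j : Fin K, (D.filter (fun p => p.2 = j)).card = F - Z := by
      intro j
      rw [← hcol' j]
      apply Finset.card_nbij' (fun p : Fin F × Fin K => p.1) (fun i : Fin F => (i, j))
      · intro p hp
        simp only [Finset.mem_coe, hDdef, Finset.mem_filter, Finset.mem_univ, true_and] at hp ⊢
        rcases hp with ⟨h1, h2⟩; rw [← h2]; exact h1
      · intro i hi
        simp only [Finset.mem_coe, hDdef, Finset.mem_filter, Finset.mem_univ, true_and] at hi ⊢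
        exact ⟨hi, trivial⟩
      · intro p hp
        simp only [Finset.mem_coe, Finset.mem_filter] at hp
        rw [← hp.2]
      · intro i _; rfl
    simp only [fib, Finset.sum_const, Finset.card_univ, Fintype.card_fin, smul_eq_mul]
  -- row counts also sum to the total
  have hRsum : ∑ i, r i = K * (F - Z) := by
    rw [← hD, Finset.card_eq_sum_card_fiberwise
      (f := fun p : Fin F × Fin K => p.1) (t := Finset.univ) (fun x _ => Finset.mem_univ _)]
    apply Finset.sum_congr rfl
    intro i _
    rw [hrdef]
    apply Eq.symm
    apply Finset.card_nbij' (fun p : Fin F × Fin K => p.2) (fun j : Fin K => (i, j))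
    · intro p hp
      simp only [Finset.mem_coe, hDdef, Finset.mem_filter, Finset.mem_univ, true_and] at hp ⊢
      rcases hp with ⟨h1, h2⟩; rw [← h2]; exact h1
    · intro j hj
      simp only [Finset.mem_coe, hDdef, Finset.mem_filter, Finset.mem_univ, true_and] at hj ⊢
      exact ⟨hj, trivial⟩
    · intro p hp
      simp only [Finset.mem_coe, Finset.mem_filter] at hp
      rw [← hp.2]
    · intro j _; rfl
  -- symbol counts sum to the total
  have hGsum : ∑ s, g s = K * (F - Z) := by
    rw [← hD, Finset.card_eq_sum_card_fiberwise
      (f := fun p : Fin F × Fin K => (A p.1 p.2).iget) (t := Finset.univ)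
      (fun x _ => Finset.mem_univ _)]
    apply Finset.sum_congr rfl
    intro s _
    rw [hgdef]
    apply Eq.symm
    congr 1
    ext p
    simp only [hDdef, hOccdef, Finset.mem_filter, Finset.mem_univ, true_and, ne_eq]
    constructor
    · rintro ⟨h1, h2⟩
      cases h : A p.1 p.2 with
      | none => exact absurd h h1
      | some t =>
        rw [h] at h2
        change t = s at h2
        rw [h2]
    · intro h; rw [h]; exact ⟨by simp, by simp⟩
  -- pairs of distinct occurrences of the same symbol
  set T : Finset ((Fin F × Fin K) × (Fin F × Fin K)) :=
    Finset.univ.biUnion (fun s : Fin S => (Occ s).offDiag) with hTdef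
  have hTcard : T.card = ∑ s, (g s * g s - g s) := by
    rw [hTdef, Finset.card_biUnion]
    · apply Finset.sum_congr rfl
      intro s _
      rw [Finset.offDiag_card, hgdef]
    · intro s _ t _ hst
      refine Finset.disjoint_left.2 fun x hx hx' => hst ?_
      rw [Finset.mem_offDiag] at hx hx'
      have h1 : A x.1.1 x.1.2 = some s := by
        have := hx.1; simp only [hOccdef, Finset.mem_filter] at this; exact this.2
      have h2 : A x.1.1 x.1.2 = some t := by
        have := hx'.1; simp only [hOccdef, Finset.mem_filter] at this; exact this.2
      rw [h1] at h2; exact Option.some_injective _ h2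
  -- pairs (ordinary entry, star) in the same row
  set U : Finset (Fin F × Fin K × Fin K) :=
    Finset.univ.filter
      (fun q : Fin F × Fin K × Fin K => A q.1 q.2.1 ≠ none ∧ A q.1 q.2.2 = none) with hUdef
  -- injection T → U
  have hTU : T.card ≤ U.card := by
    apply Finset.card_le_card_of_injOn
      (fun pq : (Fin F × Fin K) × (Fin F × Fin K) => (pq.1.1, pq.1.2, pq.2.2))
    · intro x hx
      simp only [Finset.mem_coe, hTdef, Finset.mem_biUnion, Finset.mem_univ, true_and] at hx
      obtain ⟨s, hs⟩ := hx
      rw [Finset.mem_offDiag] at hs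
      obtain ⟨hp, hq, hne⟩ := hs
      simp only [hOccdef, Finset.mem_filter, Finset.mem_univ, true_and] at hp hq
      have hne' : (x.1.1, x.1.2) ≠ (x.2.1, x.2.2) := by
        simpa using hne
      obtain ⟨_, _, hstar, _⟩ := hprop x.1.1 x.2.1 x.1.2 x.2.2 s hp hq hne'
      simp only [Finset.mem_coe, hUdef, Finset.mem_filter, Finset.mem_univ, true_and, ne_eq]
      exact ⟨by rw [hp]; simp, hstar⟩
    · intro x hx y hy hxy
      simp only [Finset.mem_coe, hTdef, Finset.mem_biUnion, Finset.mem_univ, true_and] at hx hy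
      obtain ⟨s, hs⟩ := hx
      obtain ⟨t, ht⟩ := hy
      rw [Finset.mem_offDiag] at hs ht
      obtain ⟨hp, hq, _⟩ := hs
      obtain ⟨hp', hq', _⟩ := ht
      simp only [hOccdef, Finset.mem_filter, Finset.mem_univ, true_and] at hp hq hp' hq'
      simp only [Prod.mk.injEq] at hxy
      obtain ⟨e1, e2, e3⟩ := hxy
      have hx1 : x.1 = y.1 := Prod.ext e1 e2
      have hst : s = t := by
        rw [hx1] at hp; rw [hp] at hp'; exact Option.some_injective _ hp'
      rw [← hst, ← e3] at hq'
      have hx2 : x.2 = y.2 := by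
        by_contra hne2
        have hne3 : (x.2.1, x.2.2) ≠ (y.2.1, x.2.2) := by
          intro h
          apply hne2
          simp only [Prod.mk.injEq] at h
          exact Prod.ext h.1 e3
        obtain ⟨_, hjj, _, _⟩ := hprop x.2.1 y.2.1 x.2.2 x.2.2 s hq hq' hne3
        exact hjj rfl
      exact Prod.ext hx1 hx2
  -- counting U by rows
  have hUcard : U.card = ∑ i, r i * (K - r i) := by
    rw [Finset.card_eq_sum_card_fiberwise
      (f := fun q : Fin F × Fin K × Fin K => q.1) (t := Finset.univ)
      (fun x _ => Finset.mem_univ _)]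
    apply Finset.sum_congr rfl
    intro i _
    have hstarcard : (Finset.univ.filter (fun j : Fin K => A i j = none)).card = K - r i := by
      have h2 := Finset.card_filter_add_card_filter_not
        (s := (Finset.univ : Finset (Fin K))) (p := fun j : Fin K => A i j ≠ none)
      simp only [Finset.card_univ, Fintype.card_fin, ne_eq, not_not] at h2
      have hle : r i ≤ K := hrK i
      simp only [hrdef, ne_eq] at h2 hle ⊢
      omega
    have hcb : (U.filter (fun q => q.1 = i)).card =
        ((Finset.univ.filter (fun j : Fin K => A i j ≠ none)) ×ˢ
          (Finset.univ.filter (fun j : Fin K => A i j = none))).card := by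
      apply Finset.card_nbij' (fun q : Fin F × Fin K × Fin K => (q.2.1, q.2.2))
        (fun p : Fin K × Fin K => (i, p.1, p.2))
      · intro q hq
        simp only [Finset.mem_coe, hUdef, Finset.mem_filter, Finset.mem_univ, true_and,
          Finset.mem_product] at hq ⊢
        obtain ⟨⟨h1, h2⟩, h3⟩ := hq
        rw [← h3]; exact ⟨h1, h2⟩
      · intro p hp
        simp only [Finset.mem_coe, hUdef, Finset.mem_filter, Finset.mem_univ, true_and,
          Finset.mem_product] at hp ⊢
        exact ⟨⟨hp.1, hp.2⟩, trivial⟩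
      · intro q hq
        simp only [Finset.mem_coe, Finset.mem_filter] at hq
        rw [← hq.2]
      · intro p _; rfl
    rw [hcb, Finset.card_product, hstarcard, hrdef]
  -- move to the reals
  set b : Fin S → ℝ := fun s => (g s : ℝ) with hbdef
  set a : Fin F → ℝ := fun i => (r i : ℝ) with hadef
  have hbsum : ∑ s, b s = (K : ℝ) * ((F : ℝ) - (Z : ℝ)) := by
    have h1 : ∑ s, b s = ((∑ s, g s : ℕ) : ℝ) := by rw [hbdef]; push_cast; rfl
    rw [h1, hGsum, Nat.cast_mul, Nat.cast_sub hZF]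
  have hasum : ∑ i, a i = (K : ℝ) * ((F : ℝ) - (Z : ℝ)) := by
    have h1 : ∑ i, a i = ((∑ i, r i : ℕ) : ℝ) := by rw [hadef]; push_cast; rfl
    rw [h1, hRsum, Nat.cast_mul, Nat.cast_sub hZF]
  have hcs1 : (∑ s, b s) ^ 2 ≤ (S : ℝ) * ∑ s, b s ^ 2 := by
    have h := sq_sum_le_card_mul_sum_sq (s := (Finset.univ : Finset (Fin S))) (f := b)
    simpa [Finset.card_univ] using h
  have hcs2 : (∑ i, a i) ^ 2 ≤ (F : ℝ) * ∑ i, a i ^ 2 := by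
    have h := sq_sum_le_card_mul_sum_sq (s := (Finset.univ : Finset (Fin F))) (f := a)
    simpa [Finset.card_univ] using h
  have hsumb2 : ∑ s, b s ^ 2 = (T.card : ℝ) + (K : ℝ) * ((F : ℝ) - (Z : ℝ)) := by
    have key : ∀ s : Fin S, b s ^ 2 = ((g s * g s - g s : ℕ) : ℝ) + b s := by
      intro s
      have hle : g s ≤ g s * g s := by
        rcases Nat.eq_zero_or_pos (g s) with h | h
        · simp [h]
        · calc g s = g s * 1 := (mul_one _).symm
            _ ≤ g s * g s := Nat.mul_le_mul_left _ h
      rw [Nat.cast_sub hle]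
      rw [hbdef]
      push_cast
      ring
    calc ∑ s, b s ^ 2 = ∑ s, (((g s * g s - g s : ℕ) : ℝ) + b s) :=
          Finset.sum_congr rfl fun s _ => key s
      _ = (∑ s, ((g s * g s - g s : ℕ) : ℝ)) + ∑ s, b s := Finset.sum_add_distrib
      _ = (T.card : ℝ) + (K : ℝ) * ((F : ℝ) - (Z : ℝ)) := by
          rw [hbsum, hTcard, Nat.cast_sum]
  have hUreal : (U.card : ℝ) = (K : ℝ) * ((K : ℝ) * ((F : ℝ) - (Z : ℝ))) - ∑ i, a i ^ 2 := by
    have key : ∀ i : Fin F, ((r i * (K - r i) : ℕ) : ℝ) = a i * ((K : ℝ) - a i) := by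
      intro i
      rw [Nat.cast_mul, Nat.cast_sub (hrK i), hadef]
    calc (U.card : ℝ) = ∑ i, ((r i * (K - r i) : ℕ) : ℝ) := by rw [hUcard, Nat.cast_sum]
      _ = ∑ i, (a i * ((K : ℝ) - a i)) := Finset.sum_congr rfl fun i _ => key i
      _ = (K : ℝ) * (∑ i, a i) - ∑ i, a i ^ 2 := by
          rw [Finset.mul_sum, ← Finset.sum_sub_distrib]
          exact Finset.sum_congr rfl fun i _ => by ring
      _ = _ := by rw [hasum]
  -- the key real inequality:  K * F * (F - Z) ≤ S * (F + K * Z)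
  have hFp : (0 : ℝ) < F := by exact_mod_cast hF
  have hSp : (0 : ℝ) < S := by exact_mod_cast hS
  have hKp : (0 : ℝ) < K := by exact_mod_cast hK
  have hZp : (0 : ℝ) ≤ Z := Nat.cast_nonneg Z
  have key : (K : ℝ) * F * ((F : ℝ) - Z) ≤ (S : ℝ) * ((F : ℝ) + K * Z) := by
    rcases eq_or_lt_of_le hZF with hEq | hLt
    · have : (F : ℝ) - Z = 0 := by rw [hEq]; ring
      rw [this]
      have : (0 : ℝ) ≤ (S : ℝ) * ((F : ℝ) + K * Z) := by positivity
      linarith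
    · have hep : (0 : ℝ) < (F : ℝ) - Z := by
        have : (Z : ℝ) < F := by exact_mod_cast hLt
        linarith
      set e : ℝ := (F : ℝ) - Z with hedef
      have hTUr : (T.card : ℝ) ≤ (U.card : ℝ) := by exact_mod_cast hTU
      have h1 : ((K : ℝ) * e) ^ 2 ≤ (S : ℝ) * ∑ s, b s ^ 2 := by
        rw [← hbsum]; exact hcs1
      have h5 : ((K : ℝ) * e) ^ 2 ≤ (F : ℝ) * ∑ i, a i ^ 2 := by
        rw [← hasum]; exact hcs2
      have big : (F : ℝ) * ((K : ℝ) * e) ^ 2 ≤ ((K : ℝ) * e) * ((S : ℝ) * (K * Z + F)) := by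
        calc (F : ℝ) * ((K : ℝ) * e) ^ 2
            ≤ (F : ℝ) * ((S : ℝ) * ∑ s, b s ^ 2) :=
              mul_le_mul_of_nonneg_left h1 hFp.le
          _ = (S : ℝ) * ((F : ℝ) * (T.card : ℝ) + (F : ℝ) * ((K : ℝ) * e)) := by
              rw [hsumb2]; ring
          _ ≤ (S : ℝ) * ((F : ℝ) * (U.card : ℝ) + (F : ℝ) * ((K : ℝ) * e)) := by
              have := mul_le_mul_of_nonneg_left hTUr hFp.le
              have := mul_le_mul_of_nonneg_left
                (add_le_add_right (mul_le_mul_of_nonneg_left hTUr hFp.le)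
                  ((F : ℝ) * ((K : ℝ) * e))) hSp.le
              linarith [this]
          _ = (S : ℝ) * ((F : ℝ) * ((K : ℝ) * ((K : ℝ) * e)) - (F : ℝ) * (∑ i, a i ^ 2)
                + (F : ℝ) * ((K : ℝ) * e)) := by rw [hUreal]; ring
          _ ≤ (S : ℝ) * ((F : ℝ) * ((K : ℝ) * ((K : ℝ) * e)) - ((K : ℝ) * e) ^ 2
                + (F : ℝ) * ((K : ℝ) * e)) := by
              apply mul_le_mul_of_nonneg_left _ hSp.le
              linarith [h5]
          _ = ((K : ℝ) * e) * ((S : ℝ) * (K * ((F : ℝ) - e) + F)) := by ring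
          _ = ((K : ℝ) * e) * ((S : ℝ) * (K * Z + F)) := by
              rw [hedef]; ring_nf
      have hKe : (0 : ℝ) < (K : ℝ) * e := mul_pos hKp hep
      have big' : ((K : ℝ) * e) * ((K : ℝ) * F * e) ≤ ((K : ℝ) * e) * ((S : ℝ) * (K * Z + F)) := by
        calc ((K : ℝ) * e) * ((K : ℝ) * F * e) = (F : ℝ) * ((K : ℝ) * e) ^ 2 := by ring
          _ ≤ _ := big
      have := le_of_mul_le_mul_left big' hKe
      calc (K : ℝ) * F * ((F : ℝ) - Z) = (K : ℝ) * F * e := by rw [hedef]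
        _ ≤ (S : ℝ) * (K * Z + F) := this
        _ = (S : ℝ) * ((F : ℝ) + K * Z) := by ring
  -- conclude both inequalities
  have hdenp : (0 : ℝ) < (F : ℝ) + K * Z := by positivity
  have goal2 : (K : ℝ) * ((F : ℝ) - Z) / ((F : ℝ) + K * Z) ≤ (S : ℝ) / F := by
    rw [div_le_div_iff₀ hdenp hFp]
    nlinarith [key]
  refine ⟨?_, goal2⟩
  have hN1 : (0 : ℝ) < N - 1 := by linarith
  have e2 : N - 1 + K * (M - 1) = (N - 1) * (((F : ℝ) + K * Z) / F) := by
    rw [hM]; field_simp; ring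
  have hd2 : N - 1 + K * (M - 1) ≠ 0 := by
    rw [e2]; positivity
  have heq : (K : ℝ) * (N - M) / (N - 1 + K * (M - 1)) =
      (K : ℝ) * ((F : ℝ) - Z) / ((F : ℝ) + K * Z) := by
    rw [div_eq_div_iff hd2 hdenp.ne']
    rw [hM]
    field_simp
    ring
  rw [heq, hR]
  exact goal2
end

section
/- In an (N,K) SP-LFR system with N≥2, for every integer u with 1 ≤ u ≤ min(⌊N/2⌋, K), the optimal load satisfies R*(M) ≥ (uN − u²M)/(N−1) for all M ∈ [1,N]; hence R*(M) ≥ max over such u of (uN − u²M)/(N−1). -/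
open scoped BigOperators

/-- An `(N,K)` SP-LFR scheme with file length `B` over the finite field `F`,
memory size `M` and load `R`.  The server's randomness is a probability mass
function `prand` on a finite set `P`.  Files are elements `w : Fin N → Fin B → F`,
demands are coefficient vectors `d : Fin K → Fin N → F`.  Correctness,
security (`I(W_{[N]}; X) = 0`) and privacy
(`I(d_{[K]∖S}; X, d_S, Z_S | W_{[N]}) = 0` against any nonempty colluding set
`S`) are expressed in their equivalent combinatorial/distributional form for
deterministic encoders driven by the randomness `P`. -/
structure SPLFRScheme (F : Type*) [Field F] [Fintype F]
    (N K B : ℕ) (M R : ℝ) where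
  P : Type
  [finP : Fintype P]
  prand : PMF P
  /-- cache encoding: `Z_k = φ_k(P, W_{[N]})`, at most `⌊MB⌋` symbols -/
  cache : Fin K → P → (Fin N → Fin B → F) → Fin ⌊M * (B : ℝ)⌋₊ → F
  /-- delivery signal: `X = φ(P, d_{[K]}, W_{[N]})`, at most `⌊RB⌋` symbols -/
  enc : P → (Fin K → Fin N → F) → (Fin N → Fin B → F) → Fin ⌊R * (B : ℝ)⌋₊ → F
  dec : Fin K → (Fin ⌊R * (B : ℝ)⌋₊ → F) → (Fin N → F) →
      (Fin ⌊M * (B : ℝ)⌋₊ → F) → Fin B → F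
  /-- correctness: `H(W̄_{d_k} | X, d_k, Z_k) = 0`, i.e. each user `k` can
  decode the demanded linear combination `∑_n d_{k,n} W_n`. -/
  correct : ∀ p ∈ prand.support, ∀ (d : Fin K → Fin N → F)
      (w : Fin N → Fin B → F) (k : Fin K),
      dec k (enc p d w) (d k) (cache k p w) = fun b => ∑ n, d k n * w n b
  /-- security: `I(W_{[N]}; X) = 0`, i.e. the distribution of the delivery
  signal does not depend on the library realization. -/
  secure : ∀ (d : Fin K → Fin N → F) (w w' : Fin N → Fin B → F)
      (x : Fin ⌊R * (B : ℝ)⌋₊ → F),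
      prand.toOuterMeasure {p | enc p d w = x} =
      prand.toOuterMeasure {p | enc p d w' = x}
  /-- privacy: `I(d_{[K]∖S}; X, d_S, Z_S | W_{[N]}) = 0` for every nonempty
  `S ⊆ [K]`: the joint distribution of the signal and the caches of the
  colluding set `S` does not depend on the demands outside `S`. -/
  privacy : ∀ (S : Finset (Fin K)), S.Nonempty →
      ∀ (w : Fin N → Fin B → F) (d d' : Fin K → Fin N → F),
      (∀ k ∈ S, d k = d' k) →
      ∀ (x : Fin ⌊R * (B : ℝ)⌋₊ → F) (z : Fin K → Fin ⌊M * (B : ℝ)⌋₊ → F),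
      prand.toOuterMeasure {p | enc p d w = x ∧ ∀ k ∈ S, cache k p w = z k} =
      prand.toOuterMeasure {p | enc p d' w = x ∧ ∀ k ∈ S, cache k p w = z k}

/-- The optimal load `R*(M) = liminf_{B→∞} inf {R : (M,R) achievable}`. -/
noncomputable def Rstar (F : Type*) [Field F] [Fintype F]
    (N K : ℕ) (M : ℝ) : ℝ :=
  Filter.liminf
    (fun B : ℕ => sInf {R : ℝ | 0 ≤ R ∧ Nonempty (SPLFRScheme F N K B M R)})
    Filter.atTop


/-! ### Auxiliary constructions for the proof -/

section Aux

open Filter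

variable (F : Type*) [Field F] [Fintype F]

/-- Demand matrices used in the cut-set bound: the `j`-th matrix asks user `k`
(for `k < u`) for the standard basis vector `e_{u·j + k}`. -/
def cutD (N K u t : ℕ) (j : Fin t) (k : Fin K) : Fin N → F :=
  fun n => if (n : ℕ) = u * (j : ℕ) + (k : ℕ) ∧ (k : ℕ) < u then 1 else 0

/-- Counting (cut-set) bound for any SP-LFR scheme. -/
lemma splfr_counting {N K B : ℕ} {M R : ℝ}
    (hN : 2 ≤ N) {u : ℕ} (hu1 : 1 ≤ u) (huK : u ≤ K)
    (S : SPLFRScheme F N K B M R) :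
    N * B ≤ (N - 1) / u * ⌊R * (B : ℝ)⌋₊ + u * ⌊M * (B : ℝ)⌋₊ := by
  classical
  haveI := S.finP
  set t' := (N - 1) / u with ht'
  obtain ⟨p₀, hp₀⟩ := S.prand.support_nonempty
  set x : Fin ⌊R * (B : ℝ)⌋₊ → F := S.enc p₀ (cutD F N K u (t' + 1) (Fin.last t')) 0 with hxdef
  have hx : ∀ w, ∃ p, p ∈ S.prand.support ∧
      S.enc p (cutD F N K u (t' + 1) (Fin.last t')) w = x := by
    intro w
    have h1 := S.secure (cutD F N K u (t' + 1) (Fin.last t')) w 0 x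
    have h2 : S.prand.toOuterMeasure
        {p | S.enc p (cutD F N K u (t' + 1) (Fin.last t')) (0) = x} ≠ 0 := by
      intro hz
      exact (Set.disjoint_left.mp ((PMF.toOuterMeasure_apply_eq_zero_iff _ _).mp hz) hp₀) rfl
    rw [← h1] at h2
    have h3 : ¬ Disjoint S.prand.support
        {p | S.enc p (cutD F N K u (t' + 1) (Fin.last t')) w = x} :=
      fun hd => h2 ((PMF.toOuterMeasure_apply_eq_zero_iff _ _).mpr hd)
    obtain ⟨p, hp, hpx⟩ := Set.not_disjoint_iff.mp h3
    exact ⟨p, hp, hpx⟩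
  choose pw hpwsupp hpwx using hx
  let f : (Fin N → Fin B → F) →
      (Fin t' → Fin ⌊R * (B : ℝ)⌋₊ → F) × (Fin u → Fin ⌊M * (B : ℝ)⌋₊ → F) :=
    fun w => (fun j => S.enc (pw w) (cutD F N K u (t' + 1) j.castSucc) w,
              fun k => S.cache ⟨(k : ℕ), lt_of_lt_of_le k.2 huK⟩ (pw w) w)
  have hfinj : Function.Injective f := by
    intro w w' hww
    have h1 : ∀ j : Fin t', S.enc (pw w) (cutD F N K u (t' + 1) j.castSucc) w =
        S.enc (pw w') (cutD F N K u (t' + 1) j.castSucc) w' :=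
      fun j => congrFun (congrArg Prod.fst hww) j
    have h2 : ∀ k : Fin u, S.cache ⟨(k : ℕ), lt_of_lt_of_le k.2 huK⟩ (pw w) w =
        S.cache ⟨(k : ℕ), lt_of_lt_of_le k.2 huK⟩ (pw w') w' :=
      fun k => congrFun (congrArg Prod.snd hww) k
    funext n b
    have hr : (n : ℕ) % u < u := Nat.mod_lt _ hu1
    have hjle : (n : ℕ) / u ≤ t' := Nat.div_le_div_right (by omega : (n : ℕ) ≤ N - 1)
    set jF : Fin (t' + 1) := ⟨(n : ℕ) / u, Nat.lt_succ_of_le hjle⟩ with hjF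
    set k : Fin K := ⟨(n : ℕ) % u, lt_of_lt_of_le hr huK⟩ with hk
    have henc : S.enc (pw w) (cutD F N K u (t' + 1) jF) w =
        S.enc (pw w') (cutD F N K u (t' + 1) jF) w' := by
      rcases lt_or_eq_of_le hjle with hlt | heq
      · have hjeq : jF = Fin.castSucc ⟨(n : ℕ) / u, hlt⟩ := rfl
        rw [hjeq]; exact h1 _
      · have hjeq : jF = Fin.last t' := Fin.ext heq
        rw [hjeq, hpwx w, hpwx w']
    have hcache : S.cache k (pw w) w = S.cache k (pw w') w' := h2 ⟨(n : ℕ) % u, hr⟩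
    have hval : u * (jF : ℕ) + (k : ℕ) = (n : ℕ) := Nat.div_add_mod (n : ℕ) u
    have hsum : ∀ (v : Fin N → Fin B → F),
        (∑ m, cutD F N K u (t' + 1) jF k m * v m b) = v n b := by
      intro v
      rw [Finset.sum_eq_single n]
      · simp only [cutD]
        rw [if_pos ⟨hval.symm, hr⟩, one_mul]
      · intro m _ hm
        have hcond : ¬((m : ℕ) = u * (jF : ℕ) + (k : ℕ) ∧ (k : ℕ) < u) :=
          fun hc => hm (Fin.ext (hc.1.trans hval))
        simp only [cutD]
        rw [if_neg hcond, zero_mul]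
      · intro h; exact absurd (Finset.mem_univ n) h
    have hd1 := S.correct (pw w) (hpwsupp w) (cutD F N K u (t' + 1) jF) w k
    have hd2 := S.correct (pw w') (hpwsupp w') (cutD F N K u (t' + 1) jF) w' k
    calc w n b = ∑ m, cutD F N K u (t' + 1) jF k m * w m b := (hsum w).symm
      _ = S.dec k (S.enc (pw w) (cutD F N K u (t' + 1) jF) w)
            (cutD F N K u (t' + 1) jF k) (S.cache k (pw w) w) b := (congrFun hd1 b).symm
      _ = S.dec k (S.enc (pw w') (cutD F N K u (t' + 1) jF) w')
            (cutD F N K u (t' + 1) jF k) (S.cache k (pw w') w') b := by rw [henc, hcache]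
      _ = ∑ m, cutD F N K u (t' + 1) jF k m * w' m b := congrFun hd2 b
      _ = w' n b := hsum w'
  have hcard := Fintype.card_le_of_injective f hfinj
  have hq : 1 < Fintype.card F := Fintype.one_lt_card
  have lhs : Fintype.card (Fin N → Fin B → F) = Fintype.card F ^ (B * N) := by
    simp [Fintype.card_fun, ← pow_mul]
  have rhs : Fintype.card
      ((Fin t' → Fin ⌊R * (B : ℝ)⌋₊ → F) × (Fin u → Fin ⌊M * (B : ℝ)⌋₊ → F)) =
      Fintype.card F ^ (⌊R * (B : ℝ)⌋₊ * t' + ⌊M * (B : ℝ)⌋₊ * u) := by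
    simp [Fintype.card_fun, ← pow_mul, pow_add]
  rw [lhs, rhs] at hcard
  have hexp := (Nat.pow_le_pow_iff_right hq).mp hcard
  calc N * B = B * N := Nat.mul_comm _ _
    _ ≤ ⌊R * (B : ℝ)⌋₊ * t' + ⌊M * (B : ℝ)⌋₊ * u := hexp
    _ = t' * ⌊R * (B : ℝ)⌋₊ + u * ⌊M * (B : ℝ)⌋₊ := by ring

/-- Encoder of the trivial one-time-pad scheme: block `k` of the delivery
signal is `∑_n d_{k,n} W_n + p_k`. -/
def achEnc (N K B L : ℕ) (p : Fin K → Fin B → F) (d : Fin K → Fin N → F)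
    (w : Fin N → Fin B → F) : Fin L → F :=
  fun i => if h : (i : ℕ) / B < K ∧ (i : ℕ) % B < B then
    (∑ n, d ⟨(i : ℕ) / B, h.1⟩ n * w n ⟨(i : ℕ) % B, h.2⟩) +
      p ⟨(i : ℕ) / B, h.1⟩ ⟨(i : ℕ) % B, h.2⟩
  else 0

/-- Cache of the trivial scheme: user `k` stores the pad `p_k`. -/
def achCache (K B L : ℕ) (k : Fin K) (p : Fin K → Fin B → F) : Fin L → F :=
  fun i => if h : (i : ℕ) < B then p k ⟨(i : ℕ), h⟩ else 0

/-- Decoder of the trivial scheme. -/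
def achDec (K B L L' : ℕ) (k : Fin K) (x : Fin L → F) (z : Fin L' → F) : Fin B → F :=
  fun b => (if h : (k : ℕ) * B + (b : ℕ) < L then x ⟨(k : ℕ) * B + (b : ℕ), h⟩ else 0) -
    (if h : (b : ℕ) < L' then z ⟨(b : ℕ), h⟩ else 0)

lemma achEnc_shift (N K B L : ℕ) (d d' : Fin K → Fin N → F)
    (w w' : Fin N → Fin B → F) (p : Fin K → Fin B → F) :
    achEnc F N K B L
      (p + fun k b => (∑ n, d k n * w n b) - (∑ n, d' k n * w' n b)) d' w' =
    achEnc F N K B L p d w := by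
  funext i
  simp only [achEnc]
  by_cases h : (i : ℕ) / B < K ∧ (i : ℕ) % B < B
  · rw [dif_pos h, dif_pos h]
    simp only [Pi.add_apply]
    ring
  · rw [dif_neg h, dif_neg h]

lemma ach_correct (N K B L L' : ℕ) (hL : K * B ≤ L) (hL' : B ≤ L')
    (p : Fin K → Fin B → F) (d : Fin K → Fin N → F) (w : Fin N → Fin B → F) (k : Fin K) :
    achDec F K B L L' k (achEnc F N K B L p d w) (achCache F K B L' k p) =
      fun b => ∑ n, d k n * w n b := by
  funext b
  have hB0 : 0 < B := b.pos
  have hiL : (k : ℕ) * B + (b : ℕ) < L :=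
    lt_of_lt_of_le (by calc (k : ℕ) * B + (b : ℕ) < (k : ℕ) * B + B := by omega
      _ = ((k : ℕ) + 1) * B := by ring
      _ ≤ K * B := Nat.mul_le_mul_right _ (by omega)) hL
  have hbL' : (b : ℕ) < L' := lt_of_lt_of_le b.2 hL'
  have hdiv : ((k : ℕ) * B + (b : ℕ)) / B = (k : ℕ) := by
    rw [Nat.mul_comm, Nat.mul_add_div hB0, Nat.div_eq_of_lt b.2, Nat.add_zero]
  have hmod : ((k : ℕ) * B + (b : ℕ)) % B = (b : ℕ) := by
    rw [Nat.mul_add_mod', Nat.mod_eq_of_lt b.2]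
  have hcond : ((k : ℕ) * B + (b : ℕ)) / B < K ∧ ((k : ℕ) * B + (b : ℕ)) % B < B := by
    constructor
    · rw [hdiv]; exact k.2
    · rw [hmod]; exact b.2
  simp only [achDec, achEnc, achCache]
  rw [dif_pos hiL, dif_pos hbL', dif_pos hcond, dif_pos b.2]
  have hmkK : ∀ (h : ((k : ℕ) * B + (b : ℕ)) / B < K),
      (⟨((k : ℕ) * B + (b : ℕ)) / B, h⟩ : Fin K) = k := fun h => Fin.ext hdiv
  have hmkB : ∀ (h : ((k : ℕ) * B + (b : ℕ)) % B < B),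
      (⟨((k : ℕ) * B + (b : ℕ)) % B, h⟩ : Fin B) = b := fun h => Fin.ext hmod
  have hmkb : ∀ (h : (b : ℕ) < B), (⟨(b : ℕ), h⟩ : Fin B) = b := fun h => Fin.ext rfl
  rw [hmkK, hmkB, hmkb]
  ring

lemma uniform_preimage {P : Type} [Fintype P] [Nonempty P] (σ : P ≃ P) (s : Set P) :
    (PMF.uniformOfFintype P).toOuterMeasure (σ ⁻¹' s) =
    (PMF.uniformOfFintype P).toOuterMeasure s := by
  rw [PMF.toOuterMeasure_apply, PMF.toOuterMeasure_apply,
    ← σ.tsum_eq (fun a => s.indicator (PMF.uniformOfFintype P) a)]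
  refine tsum_congr fun p => ?_
  by_cases hp : σ p ∈ s
  · rw [Set.indicator_of_mem hp, Set.indicator_of_mem (show p ∈ ⇑σ ⁻¹' s from hp)]
    simp
  · rw [Set.indicator_of_notMem hp, Set.indicator_of_notMem (show p ∉ ⇑σ ⁻¹' s from hp)]

/-- The trivial one-time-pad scheme shows that load `R = K` is achievable. -/
lemma splfr_achievable (N K B : ℕ) (M : ℝ) (hM1 : 1 ≤ M) :
    Nonempty (SPLFRScheme F N K B M (K : ℝ)) := by
  classical
  have hKB : K * B ≤ ⌊(K : ℝ) * (B : ℝ)⌋₊ := by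
    rw [show (K : ℝ) * (B : ℝ) = ((K * B : ℕ) : ℝ) by push_cast; ring, Nat.floor_natCast]
  have hMB : B ≤ ⌊M * (B : ℝ)⌋₊ :=
    Nat.le_floor (le_mul_of_one_le_left (Nat.cast_nonneg B) hM1)
  haveI : Nonempty (Fin K → Fin B → Fin (Fintype.card F)) :=
    ⟨fun _ _ => ⟨0, Fintype.card_pos⟩⟩
  let E : (Fin K → Fin B → Fin (Fintype.card F)) ≃ (Fin K → Fin B → F) :=
    Equiv.piCongrRight fun _ => Equiv.piCongrRight fun _ => (Fintype.equivFin F).symm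
  refine ⟨{
    P := Fin K → Fin B → Fin (Fintype.card F)
    finP := inferInstance
    prand := PMF.uniformOfFintype _
    cache := fun k p _ => achCache F K B _ k (E p)
    enc := fun p d w => achEnc F N K B _ (E p) d w
    dec := fun k x _ z => achDec F K B _ _ k x z
    correct := fun p _ d w k => ach_correct F N K B _ _ hKB hMB (E p) d w k
    secure := ?_
    privacy := ?_ }⟩
  · intro d w w' x
    set c : Fin K → Fin B → F :=
      fun k b => (∑ n, d k n * w n b) - (∑ n, d k n * w' n b) with hc
    let σ : (Fin K → Fin B → Fin (Fintype.card F)) ≃ (Fin K → Fin B → Fin (Fintype.card F)) :=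
      E.trans ((Equiv.addRight c).trans E.symm)
    have hEσ : ∀ p, E (σ p) = E p + c := fun p => by
      simp only [σ, Equiv.trans_apply, Equiv.apply_symm_apply, Equiv.coe_addRight]
    have hset : {p | achEnc F N K B ⌊(K : ℝ) * (B : ℝ)⌋₊ (E p) d w = x} =
        σ ⁻¹' {p | achEnc F N K B ⌊(K : ℝ) * (B : ℝ)⌋₊ (E p) d w' = x} := by
      ext p
      simp only [Set.mem_preimage, Set.mem_setOf_eq]
      rw [hEσ p,
        show (E p) + c = (E p) + fun k b => (∑ n, d k n * w n b) - (∑ n, d k n * w' n b)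
          from rfl,
        achEnc_shift]
    show (PMF.uniformOfFintype _).toOuterMeasure
        {p | achEnc F N K B ⌊(K : ℝ) * (B : ℝ)⌋₊ (E p) d w = x} =
      (PMF.uniformOfFintype _).toOuterMeasure
        {p | achEnc F N K B ⌊(K : ℝ) * (B : ℝ)⌋₊ (E p) d w' = x}
    rw [hset, uniform_preimage]
  · intro S hS w d d' hdd' x z
    set c : Fin K → Fin B → F :=
      fun k b => (∑ n, d k n * w n b) - (∑ n, d' k n * w n b) with hc
    have hc0 : ∀ k ∈ S, c k = 0 := by
      intro k hk
      funext b
      simp only [hc, hdd' k hk, sub_self, Pi.zero_apply]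
    let σ : (Fin K → Fin B → Fin (Fintype.card F)) ≃ (Fin K → Fin B → Fin (Fintype.card F)) :=
      E.trans ((Equiv.addRight c).trans E.symm)
    have hEσ : ∀ p, E (σ p) = E p + c := fun p => by
      simp only [σ, Equiv.trans_apply, Equiv.apply_symm_apply, Equiv.coe_addRight]
    have hcache : ∀ (q : Fin K → Fin B → F), ∀ k ∈ S,
        achCache F K B ⌊M * (B : ℝ)⌋₊ k (q + c) = achCache F K B ⌊M * (B : ℝ)⌋₊ k q := by
      intro q k hk
      funext i
      simp only [achCache]
      by_cases h : (i : ℕ) < B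
      · rw [dif_pos h, dif_pos h, Pi.add_apply, Pi.add_apply, hc0 k hk, Pi.zero_apply, add_zero]
      · rw [dif_neg h, dif_neg h]
    have hshift : ∀ (q : Fin K → Fin B → F),
        achEnc F N K B ⌊(K : ℝ) * (B : ℝ)⌋₊ (q + c) d' w =
        achEnc F N K B ⌊(K : ℝ) * (B : ℝ)⌋₊ q d w := fun q => by
      rw [show q + c = q + fun k b => (∑ n, d k n * w n b) - (∑ n, d' k n * w n b)
          from rfl, achEnc_shift]
    have hset : {p | achEnc F N K B ⌊(K : ℝ) * (B : ℝ)⌋₊ (E p) d w = x ∧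
          ∀ k ∈ S, achCache F K B ⌊M * (B : ℝ)⌋₊ k (E p) = z k} =
        σ ⁻¹' {p | achEnc F N K B ⌊(K : ℝ) * (B : ℝ)⌋₊ (E p) d' w = x ∧
          ∀ k ∈ S, achCache F K B ⌊M * (B : ℝ)⌋₊ k (E p) = z k} := by
      ext p
      simp only [Set.mem_preimage, Set.mem_setOf_eq, hEσ p]
      rw [hshift (E p)]
      constructor
      · rintro ⟨h1, h2⟩
        exact ⟨h1, fun k hk => by rw [hcache (E p) k hk]; exact h2 k hk⟩
      · rintro ⟨h1, h2⟩
        exact ⟨h1, fun k hk => by rw [← hcache (E p) k hk]; exact h2 k hk⟩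
    show (PMF.uniformOfFintype _).toOuterMeasure
        {p | achEnc F N K B ⌊(K : ℝ) * (B : ℝ)⌋₊ (E p) d w = x ∧
          ∀ k ∈ S, achCache F K B ⌊M * (B : ℝ)⌋₊ k (E p) = z k} =
      (PMF.uniformOfFintype _).toOuterMeasure
        {p | achEnc F N K B ⌊(K : ℝ) * (B : ℝ)⌋₊ (E p) d' w = x ∧
          ∀ k ∈ S, achCache F K B ⌊M * (B : ℝ)⌋₊ k (E p) = z k}
    rw [hset, uniform_preimage]

end Aux

/-- cut-set bound: in an `(N,K)` SP-LFR system with `N ≥ 2`,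
for every integer `u` with `1 ≤ u ≤ min(⌊N/2⌋, K)`, the optimal load
satisfies `R*(M) ≥ (uN - u²M)/(N-1)` for all `M ∈ [1,N]`. -/
theorem stmt9 (F : Type*) [Field F] [Fintype F] (N K : ℕ)
    (hN : 2 ≤ N) (hK : 1 ≤ K)
    (M : ℝ) (hM1 : 1 ≤ M) (hMN : M ≤ (N : ℝ))
    (u : ℕ) (hu1 : 1 ≤ u) (hu : u ≤ min (N / 2) K) :
    ((u : ℝ) * N - (u : ℝ) ^ 2 * M) / ((N : ℝ) - 1) ≤ Rstar F N K M := by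
  have huK : u ≤ K := hu.trans (min_le_right _ _)
  have hN1' : (0 : ℝ) < (N : ℝ) - 1 := by
    have h2 : (2 : ℝ) ≤ (N : ℝ) := by exact_mod_cast hN
    linarith
  rw [Rstar]
  apply Filter.le_liminf_of_le
  · apply Filter.isCoboundedUnder_ge_of_eventually_le (x := (K : ℝ)) Filter.atTop
    filter_upwards with B
    refine csInf_le ⟨0, fun r hr => hr.1⟩ ?_
    exact ⟨Nat.cast_nonneg K, splfr_achievable F N K B M hM1⟩
  · filter_upwards [Filter.eventually_ge_atTop 1] with B hB
    refine le_csInf ⟨(K : ℝ), Nat.cast_nonneg K, splfr_achievable F N K B M hM1⟩ ?_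
    rintro R ⟨hR0, ⟨S⟩⟩
    have hnat := splfr_counting F hN hu1 huK S
    set t' := (N - 1) / u with ht'
    have hBpos : (0 : ℝ) < (B : ℝ) := by
      have : 0 < B := by omega
      exact_mod_cast this
    have hM0 : (0 : ℝ) ≤ M := le_trans zero_le_one hM1
    have hA : (N : ℝ) * B ≤ (t' : ℝ) * (R * B) + (u : ℝ) * (M * B) := by
      have h1 : ((N * B : ℕ) : ℝ) ≤
          ((t' * ⌊R * (B : ℝ)⌋₊ + u * ⌊M * (B : ℝ)⌋₊ : ℕ) : ℝ) := Nat.cast_le.mpr hnat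
      push_cast at h1
      have hfR : ((⌊R * (B : ℝ)⌋₊ : ℕ) : ℝ) ≤ R * B :=
        Nat.floor_le (mul_nonneg hR0 (Nat.cast_nonneg B))
      have hfM : ((⌊M * (B : ℝ)⌋₊ : ℕ) : ℝ) ≤ M * B :=
        Nat.floor_le (mul_nonneg hM0 (Nat.cast_nonneg B))
      have e1 := mul_le_mul_of_nonneg_left hfR (Nat.cast_nonneg (α := ℝ) t')
      have e2 := mul_le_mul_of_nonneg_left hfM (Nat.cast_nonneg (α := ℝ) u)
      linarith
    have hut : (u : ℝ) * (t' : ℝ) ≤ (N : ℝ) - 1 := by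
      have h := Nat.div_mul_le_self (N - 1) u
      have h2 : (((N - 1) / u * u : ℕ) : ℝ) ≤ (((N - 1) : ℕ) : ℝ) := Nat.cast_le.mpr h
      rw [Nat.cast_sub (by omega : 1 ≤ N)] at h2
      push_cast at h2
      linarith
    have hstep : (N : ℝ) ≤ (t' : ℝ) * R + (u : ℝ) * M := by nlinarith
    rw [div_le_iff₀ hN1']
    have hu0 : (0 : ℝ) ≤ (u : ℝ) := Nat.cast_nonneg u
    nlinarith [mul_le_mul_of_nonneg_left hstep hu0, mul_le_mul_of_nonneg_right hut hR0]
end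

section
/- Let N ≥ 2, K ≥ 1 be integers and let R_MAN : [1,N] → ℝ be the lower convex envelope of the points (M_t, R_t) = (1 + t(N−1)/K, (K−t)/(t+1)), t ∈ [0:K]. Then R_MAN(M) ≤ (N−M)/(M−1) for all M ∈ (1, N]. -/
open scoped BigOperators

/-- The lower convex envelope of finitely many points `pts i = (x_i, y_i)`,
evaluated at `x`: the infimum of the values of convex combinations of the
points whose first coordinate equals `x`. -/
noncomputable def lowerConvexEnvelope {m : ℕ} (pts : Fin m → ℝ × ℝ)
    (x : ℝ) : ℝ :=
  sInf {y : ℝ | ∃ lam : Fin m → ℝ, (∀ i, 0 ≤ lam i) ∧ (∑ i, lam i) = 1 ∧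
    (∑ i, lam i * (pts i).1) = x ∧ (∑ i, lam i * (pts i).2) = y}

/-- Key inequality: the chord value lies below `(k - s)/s` at `s = t - θ`. -/
lemma key_ineq (k t θ : ℝ) (ht1 : 1 ≤ t) (htK : t ≤ k) (h0 : 0 ≤ θ) (h1 : θ < 1) :
    θ * ((k - t + 1) / t) + (1 - θ) * ((k - t) / (t + 1)) ≤ (k - (t - θ)) / (t - θ) := by
  have ht : (0:ℝ) < t := by linarith
  have ht' : (0:ℝ) < t + 1 := by linarith
  have htθ : (0:ℝ) < t - θ := by linarith
  rw [show θ * ((k - t + 1) / t) + (1 - θ) * ((k - t) / (t + 1))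
      = (θ * (k - t + 1) * (t + 1) + (1 - θ) * ((k - t) * t)) / (t * (t + 1)) by
    field_simp]
  rw [div_le_div_iff₀ (by positivity) htθ]
  nlinarith [mul_nonneg (sub_nonneg.2 htK) ht.le, sq_nonneg θ, sq_nonneg (1 - θ)]

set_option maxHeartbeats 800000 in
/-- for integers `N ≥ 2`, `K ≥ 1`, the lower convex envelope
`R_MAN` of the MAN points `(M_t, R_t) = (1 + t(N-1)/K, (K-t)/(t+1))`,
`t ∈ [0:K]`, satisfies `R_MAN(M) ≤ (N-M)/(M-1)` on `(1, N]`. -/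
theorem stmt10 (N K : ℕ) (hN : 2 ≤ N) (hK : 1 ≤ K)
    (M : ℝ) (hM1 : 1 < M) (hMN : M ≤ (N : ℝ)) :
    lowerConvexEnvelope
      (fun t : Fin (K + 1) =>
        (1 + (t : ℝ) * ((N : ℝ) - 1) / K, ((K : ℝ) - t) / (t + 1))) M
      ≤ ((N : ℝ) - M) / (M - 1) := by
  simp only [lowerConvexEnvelope]
  have hN2 : (2:ℝ) ≤ (N:ℝ) := by exact_mod_cast hN
  have hN1 : (0:ℝ) < (N:ℝ) - 1 := by linarith
  have hK0 : (0:ℝ) < (K:ℝ) := by exact_mod_cast hK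
  set s : ℝ := (M - 1) * K / ((N:ℝ) - 1) with hs_def
  have hs0 : 0 < s := by
    apply div_pos (mul_pos (by linarith) hK0) hN1
  have hsK : s ≤ (K:ℝ) := by
    rw [hs_def, div_le_iff₀ hN1]
    nlinarith
  set t : ℕ := ⌈s⌉₊ with ht_def
  have ht1 : 1 ≤ t := Nat.ceil_pos.2 hs0
  have htK : t ≤ K := Nat.ceil_le.2 hsK
  have hts : s ≤ (t:ℝ) := Nat.le_ceil s
  have hts1 : (t:ℝ) < s + 1 := by
    have := Nat.ceil_lt_add_one hs0.le
    exact_mod_cast this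
  set θ : ℝ := (t:ℝ) - s with hθ_def
  have hθ0 : 0 ≤ θ := by simp [hθ_def]; linarith
  have hθ1 : θ < 1 := by simp [hθ_def]; linarith
  have ht1R : (1:ℝ) ≤ (t:ℝ) := by exact_mod_cast ht1
  have htKR : (t:ℝ) ≤ (K:ℝ) := by exact_mod_cast htK
  set a : Fin (K+1) := ⟨t - 1, by omega⟩ with ha_def
  set b : Fin (K+1) := ⟨t, by omega⟩ with hb_def
  have hab : a ≠ b := by
    simp [ha_def, hb_def, Fin.ext_iff]; omega
  have haR : ((a : Fin (K+1)) : ℝ) = (t:ℝ) - 1 := by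
    simp [ha_def]
    push_cast [Nat.cast_sub ht1]
    ring
  have hbR : ((b : Fin (K+1)) : ℝ) = (t:ℝ) := by simp [hb_def]
  set lam : Fin (K+1) → ℝ := fun i => if i = a then θ else if i = b then 1 - θ else 0
    with hlam_def
  have sumf : ∀ f : Fin (K+1) → ℝ, ∑ i, lam i * f i = θ * f a + (1 - θ) * f b := by
    intro f
    have step : ∀ i, lam i * f i =
        (if i = a then θ * f a else 0) + (if i = b then (1 - θ) * f b else 0) := by
      intro i
      simp only [hlam_def]
      by_cases h1 : i = a
      · have h2 : ¬ i = b := fun h => hab (h1.symm.trans h)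
        rw [if_pos h1, if_pos h1, if_neg h2, h1]; ring
      · by_cases h2 : i = b
        · rw [if_neg h1, if_pos h2, if_neg h1, if_pos h2, h2]; ring
        · simp only [if_neg h1, if_neg h2]; ring
    rw [Finset.sum_congr rfl (fun i _ => step i), Finset.sum_add_distrib]
    simp
  -- the chord value
  set v : ℝ := θ * (((K:ℝ) - (a:ℝ)) / ((a:ℝ) + 1)) + (1 - θ) * (((K:ℝ) - (b:ℝ)) / ((b:ℝ) + 1))
    with hv_def
  have hmem : v ∈ {y : ℝ | ∃ lam : Fin (K+1) → ℝ, (∀ i, 0 ≤ lam i) ∧ (∑ i, lam i) = 1 ∧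
      (∑ i, lam i * (1 + (i : ℝ) * ((N : ℝ) - 1) / K)) = M ∧
      (∑ i, lam i * (((K : ℝ) - i) / (i + 1))) = y} := by
    refine ⟨lam, ?_, ?_, ?_, ?_⟩
    · intro i
      simp only [hlam_def]
      split_ifs <;> linarith
    · have := sumf (fun _ => 1)
      simpa using this
    · rw [sumf]
      rw [haR, hbR]
      have hsM : s * ((N:ℝ) - 1) / K = M - 1 := by
        rw [hs_def]; field_simp
      have expand : θ * (1 + ((t:ℝ) - 1) * ((N:ℝ) - 1) / K) +
          (1 - θ) * (1 + (t:ℝ) * ((N:ℝ) - 1) / K) = 1 + s * ((N:ℝ) - 1) / K := by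
        rw [hθ_def]; field_simp; ring
      rw [expand, hsM]; ring
    · rw [sumf, hv_def]
  have hbdd : BddBelow {y : ℝ | ∃ lam : Fin (K+1) → ℝ, (∀ i, 0 ≤ lam i) ∧ (∑ i, lam i) = 1 ∧
      (∑ i, lam i * (1 + (i : ℝ) * ((N : ℝ) - 1) / K)) = M ∧
      (∑ i, lam i * (((K : ℝ) - i) / (i + 1))) = y} := by
    refine ⟨0, ?_⟩
    rintro y ⟨μ, hμ0, -, -, rfl⟩
    apply Finset.sum_nonneg
    intro i _
    apply mul_nonneg (hμ0 i)
    apply div_nonneg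
    · have : (i:ℕ) ≤ K := by omega
      have : ((i:ℕ):ℝ) ≤ (K:ℝ) := by exact_mod_cast this
      linarith
    · positivity
  have hvle : v ≤ ((N:ℝ) - M) / (M - 1) := by
    have hkey := key_ineq (K:ℝ) (t:ℝ) θ ht1R htKR hθ0 hθ1
    have hv' : v = θ * (((K:ℝ) - (t:ℝ) + 1) / (t:ℝ)) +
        (1 - θ) * (((K:ℝ) - (t:ℝ)) / ((t:ℝ) + 1)) := by
      rw [hv_def, haR, hbR]; ring_nf
    have hts' : (t:ℝ) - θ = s := by rw [hθ_def]; ring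
    rw [hv', ]
    refine hkey.trans ?_
    rw [hts']
    have hM1' : (0:ℝ) < M - 1 := by linarith
    rw [div_le_div_iff₀ hs0 hM1']
    rw [hs_def]
    field_simp
    ring_nf
    exact le_refl _
  exact le_trans (csInf_le hbdd hmem) hvle
end

section
/- Let N ≥ K ≥ 2 be integers, t ∈ [1:K], and θ_t = (K−t)/(N−1) ∈ [0,1]. Then tN/K = θ_t(1 + (t−1)(N−1)/K) + (1−θ_t)(1 + t(N−1)/K), and (θ_t·(K−t+1)/t + (1−θ_t)·(K−t)/(t+1)) / ((K−t)/(t+1)) = 1 + (K+1)/((N−1)t), which is at most 1 + (K+1)/(N−1), and hence at most 2 if N ≥ K+2, at most 2.5 if N = K+1, and at most 3 if N = K ≥ 3 (when K−t > 0; the ratio bound requires t ≥ 1 and K−t ≥ 1). -/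
/-- for integers `N ≥ K ≥ 2`, `t ∈ [1:K]` and
`θ_t = (K-t)/(N-1)`, we have `θ_t ∈ [0,1]`, the convex-combination identity
`tN/K = θ_t·M_{t-1} + (1-θ_t)·M_t` with `M_s = 1 + s(N-1)/K`, and (when
`K - t ≥ 1`) the ratio
`(θ_t·R_{t-1} + (1-θ_t)·R_t) / R'_t = 1 + (K+1)/((N-1)t)` with
`R_s = (K-s)/(s+1)` and `R'_t = (K-t)/(t+1)`, which is at most
`1 + (K+1)/(N-1)`, hence at most `2` if `N ≥ K+2`, at most `2.5` if
`N = K+1`, and at most `3` if `N = K ≥ 3`. -/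
theorem stmt17 (N K t : ℕ) (hK : 2 ≤ K) (hNK : K ≤ N)
    (ht1 : 1 ≤ t) (htK : t ≤ K)
    (θ : ℝ) (hθ : θ = ((K : ℝ) - t) / ((N : ℝ) - 1)) :
    (0 ≤ θ ∧ θ ≤ 1) ∧
    ((t : ℝ) * N / K =
      θ * (1 + ((t : ℝ) - 1) * ((N : ℝ) - 1) / K) +
      (1 - θ) * (1 + (t : ℝ) * ((N : ℝ) - 1) / K)) ∧
    (t < K →
      ((θ * (((K : ℝ) - ((t : ℝ) - 1)) / (((t : ℝ) - 1) + 1)) +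
          (1 - θ) * (((K : ℝ) - t) / ((t : ℝ) + 1))) /
        (((K : ℝ) - t) / ((t : ℝ) + 1))
        = 1 + ((K : ℝ) + 1) / (((N : ℝ) - 1) * t)) ∧
      (1 + ((K : ℝ) + 1) / (((N : ℝ) - 1) * t) ≤
        1 + ((K : ℝ) + 1) / ((N : ℝ) - 1)) ∧
      (K + 2 ≤ N → 1 + ((K : ℝ) + 1) / (((N : ℝ) - 1) * t) ≤ 2) ∧
      (N = K + 1 → 1 + ((K : ℝ) + 1) / (((N : ℝ) - 1) * t) ≤ 2.5) ∧
      (N = K → 3 ≤ K → 1 + ((K : ℝ) + 1) / (((N : ℝ) - 1) * t) ≤ 3)) := by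
  have hKR : (2:ℝ) ≤ K := by exact_mod_cast hK
  have hNKR : (K:ℝ) ≤ N := by exact_mod_cast hNK
  have htR : (1:ℝ) ≤ t := by exact_mod_cast ht1
  have htKR : (t:ℝ) ≤ K := by exact_mod_cast htK
  have hN1 : (0:ℝ) < (N:ℝ) - 1 := by linarith
  have hK0 : (0:ℝ) < K := by linarith
  have ht0 : (0:ℝ) < t := by linarith
  refine ⟨⟨?_, ?_⟩, ?_, ?_⟩
  · rw [hθ]; exact div_nonneg (by linarith) (by linarith)
  · rw [hθ, div_le_one hN1]; linarith
  · rw [hθ]; field_simp; ring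
  · intro hlt
    have hltR : (t:ℝ) < K := by exact_mod_cast hlt
    refine ⟨?_, ?_, ?_, ?_, ?_⟩
    · rw [hθ]
      have h1 : (↑K - ↑t : ℝ) ≠ 0 := by linarith
      have h2 : ((t:ℝ) + 1) ≠ 0 := by linarith
      have h3 : ((N:ℝ) - 1) ≠ 0 := by linarith
      have h4 : (t:ℝ) ≠ 0 := by linarith
      rw [sub_add_cancel]
      field_simp
      ring
    · have : ((K:ℝ)+1) / (((N:ℝ)-1)*t) ≤ ((K:ℝ)+1)/((N:ℝ)-1) := by
        apply div_le_div_of_nonneg_left (by linarith) hN1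
        nlinarith
      linarith
    · intro h
      have hR : (K:ℝ) + 2 ≤ N := by exact_mod_cast h
      have h1 : ((K:ℝ)+1) / (((N:ℝ)-1)*t) ≤ 1 := by
        rw [div_le_one (by positivity)]
        nlinarith
      linarith
    · intro h
      have hR : (N:ℝ) = K + 1 := by exact_mod_cast h
      have h1 : ((K:ℝ)+1) / (((N:ℝ)-1)*t) ≤ 1.5 := by
        rw [div_le_iff₀ (by positivity)]
        nlinarith
      norm_num at h1 ⊢
      linarith
    · intro h h3
      have hR : (N:ℝ) = K := by exact_mod_cast h
      have h3R : (3:ℝ) ≤ K := by exact_mod_cast h3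
      have h1 : ((K:ℝ)+1) / (((N:ℝ)-1)*t) ≤ 2 := by
        rw [div_le_iff₀ (by positivity)]
        nlinarith
      linarith
end
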